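/- For every n ≥ 1, the proportion of traffic through the root of T_n satisfies p_n(root) = ((k_1−1)/k_1)·((N(n)−1)/N(n)) + 2/N(n), and consequently p_n(root) → 1 − 1/k_1 as n → ∞. -/

import Mathlib

open Finset Filter

namespace TreeTraffic

/-- `beta k l = k 1 * k 2 * ⋯ * k l`, with `beta k 0 = 1`. -/
def beta (k : ℕ → ℕ) (l : ℕ) : ℕ := ∏ i ∈ Finset.range l, k (i + 1)

/-- `Ncard k n = ∑_{l=0}^n beta k l`, the number of vertices of `T_n`. -/
def Ncard (k : ℕ → ℕ) (n : ℕ) : ℕ := ∑ l ∈ Finset.range (n + 1), beta k l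

/-- The set of admissible sequences of length exactly `m`:
vertices at depth `m`, i.e. lists `[x_1, …, x_m]` with `x_i ∈ {1, …, k i}`. -/
def level (k : ℕ → ℕ) : ℕ → Finset (List ℕ)
  | 0 => {[]}
  | m + 1 => (level k m).biUnion (fun l => (Finset.Icc 1 (k (m + 1))).image (fun x => l ++ [x]))

/-- The vertex set of the truncated tree `T_n`: all admissible sequences of length `≤ n`. -/
def T (k : ℕ → ℕ) (n : ℕ) : Finset (List ℕ) :=
  (Finset.range (n + 1)).biUnion (level k)

/-- Length of the longest common prefix of two lists. -/
def lcp : List ℕ → List ℕ → ℕ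
  | a :: as, b :: bs => if a = b then lcp as bs + 1 else 0
  | _, _ => 0

/-- The graph distance between two vertices of the tree. -/
def treeDist (u w : List ℕ) : ℕ := (u.length - lcp u w) + (w.length - lcp u w)

/-- `v` lies on the (unique) geodesic path joining `u` and `w` in the tree. -/
def onPath (v u w : List ℕ) : Prop := treeDist u v + treeDist v w = treeDist u w

instance (v u w : List ℕ) : Decidable (onPath v u w) := by
  unfold onPath; infer_instance

/-- The traffic through `v` in `T_n`: the number of unordered pairs `{u, w}` of distinct
vertices of `T_n` such that `v` lies on the unique path joining `u` and `w`. -/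
def traffic (k : ℕ → ℕ) (n : ℕ) (v : List ℕ) : ℕ :=
  (((T k n).powersetCard 2).filter
    (fun s => ∃ u ∈ s, ∃ w ∈ s, u ≠ w ∧ onPath v u w)).card

/-- The proportion of the traffic of `T_n` passing through `v`:
`p_n(v) = l_n(v) / (N (N - 1) / 2)`. -/
noncomputable def trafficProp (k : ℕ → ℕ) (n : ℕ) (v : List ℕ) : ℝ :=
  (traffic k n v : ℝ) / ((Ncard k n : ℝ) * ((Ncard k n : ℝ) - 1) / 2)

/-! ### Auxiliary lemmas -/

lemma lcp_nil_left (w : List ℕ) : lcp [] w = 0 := by cases w <;> rfl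
lemma lcp_nil_right (u : List ℕ) : lcp u [] = 0 := by cases u <;> rfl

lemma lcp_comm (u : List ℕ) : ∀ w, lcp u w = lcp w u := by
  induction u with
  | nil => intro w; rw [lcp_nil_left, lcp_nil_right]
  | cons a as ih =>
    intro w
    cases w with
    | nil => rw [lcp_nil_left, lcp_nil_right]
    | cons b bs =>
      show (if a = b then lcp as bs + 1 else 0) = (if b = a then lcp bs as + 1 else 0)
      by_cases h : a = b
      · simp [h, ih bs]
      · simp [h, Ne.symm h]

lemma lcp_le_left (u : List ℕ) : ∀ w, lcp u w ≤ u.length := by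
  induction u with
  | nil => intro w; rw [lcp_nil_left]; simp
  | cons a as ih =>
    intro w
    cases w with
    | nil => rw [lcp_nil_right]; simp
    | cons b bs =>
      show (if a = b then lcp as bs + 1 else 0) ≤ as.length + 1
      by_cases h : a = b
      · simpa [h] using ih bs
      · simp [h]

lemma lcp_le_right (u w : List ℕ) : lcp u w ≤ w.length := by
  rw [lcp_comm]; exact lcp_le_left w u

lemma onPath_root_iff (u w : List ℕ) : onPath [] u w ↔ lcp u w = 0 := by
  have h1 := lcp_le_left u w
  have h2 := lcp_le_right u w
  unfold onPath treeDist
  rw [lcp_nil_left, lcp_nil_right]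
  simp only [List.length_nil]
  omega

lemma mem_level_iff {k : ℕ → ℕ} {m : ℕ} {l : List ℕ} :
    l ∈ level k m ↔ l.length = m ∧ ∀ i < m, 1 ≤ l.getD i 0 ∧ l.getD i 0 ≤ k (i + 1) := by
  induction m generalizing l with
  | zero =>
    simp [level, List.length_eq_zero_iff]
  | succ m ih =>
    simp only [level, Finset.mem_biUnion, Finset.mem_image, Finset.mem_Icc]
    constructor
    · rintro ⟨l', hl', x, hx, rfl⟩
      rw [ih] at hl'
      obtain ⟨hlen, hb⟩ := hl'
      refine ⟨by simp [hlen], ?_⟩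
      intro i hi
      rcases Nat.lt_succ_iff_lt_or_eq.mp hi with h | h
      · rw [List.getD_append _ _ _ _ (by omega)]
        exact hb i h
      · subst h
        rw [List.getD_append_right _ _ _ _ (by omega), hlen]
        simpa using hx
    · rintro ⟨hlen, hb⟩
      have hne : l ≠ [] := by intro h; subst h; simp at hlen
      refine ⟨l.dropLast, ?_, l.getLast hne, ?_, List.dropLast_append_getLast hne⟩
      · rw [ih]
        have hdl : l.dropLast.length = m := by
          rw [List.length_dropLast, hlen]; rfl
        refine ⟨hdl, fun i hi => ?_⟩
        have : l.dropLast.getD i 0 = l.getD i 0 := by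
          conv_rhs => rw [← List.dropLast_append_getLast hne]
          rw [List.getD_append _ _ _ _ (by omega)]
        rw [this]
        exact hb i (by omega)
      · have : l.getD m 0 = l.getLast hne := by
          conv_lhs => rw [← List.dropLast_append_getLast hne]
          rw [List.getD_append_right _ _ _ _ (by rw [List.length_dropLast, hlen]; omega)]
          rw [List.length_dropLast, hlen]
          simp
        have h2 := hb m (by omega)
        rw [this] at h2
        exact h2

lemma length_eq_of_mem_level {k : ℕ → ℕ} {m : ℕ} {l : List ℕ} (h : l ∈ level k m) :
    l.length = m := (mem_level_iff.mp h).1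

lemma mem_T_iff {k : ℕ → ℕ} {n : ℕ} {l : List ℕ} :
    l ∈ T k n ↔ l.length ≤ n ∧ ∀ i < l.length, 1 ≤ l.getD i 0 ∧ l.getD i 0 ≤ k (i + 1) := by
  simp only [T, Finset.mem_biUnion, Finset.mem_range, mem_level_iff]
  constructor
  · rintro ⟨m, hm, rfl, hb⟩
    exact ⟨by omega, hb⟩
  · rintro ⟨hm, hb⟩
    exact ⟨l.length, by omega, rfl, hb⟩

lemma card_level (k : ℕ → ℕ) (m : ℕ) : (level k m).card = beta k m := by
  induction m with
  | zero => simp [level, beta]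
  | succ m ih =>
    rw [level, Finset.card_biUnion, beta, Finset.prod_range_succ, ← beta, ← ih]
    · rw [← Finset.sum_const_nat (m := k (m + 1)) (fun l hl => ?_)]
      rw [Finset.card_image_of_injective _ (fun a b hab => by simpa using hab)]
      simp
    · intro l1 h1 l2 h2 hne
      simp only [Finset.disjoint_left, Finset.mem_image]
      rintro t ⟨x, hx, rfl⟩ ⟨y, hy, heq⟩
      have := (List.append_inj heq.symm (by
        rw [length_eq_of_mem_level h1, length_eq_of_mem_level h2])).1
      exact hne this

lemma card_T (k : ℕ → ℕ) (n : ℕ) : (T k n).card = Ncard k n := by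
  rw [T, Finset.card_biUnion, Ncard]
  · exact Finset.sum_congr rfl fun m _ => card_level k m
  · intro m1 h1 m2 h2 hne
    simp only [Finset.disjoint_left]
    intro l hl1 hl2
    exact hne ((length_eq_of_mem_level hl1).symm.trans (length_eq_of_mem_level hl2))

lemma root_mem_T (k : ℕ → ℕ) (n : ℕ) : [] ∈ T k n := by
  rw [mem_T_iff]; simp

lemma head_bounds {k : ℕ → ℕ} {n : ℕ} {a : ℕ} {t : List ℕ} (h : (a :: t) ∈ T k n) :
    1 ≤ a ∧ a ≤ k 1 := by
  rw [mem_T_iff] at h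
  simpa using h.2 0 (by simp)

/-- Head-swap bijection: fibers of `headD 0` over `T k n` all have the same cardinality. -/
lemma card_head_fiber_eq {k : ℕ → ℕ} {n : ℕ} {x y : ℕ}
    (hx1 : 1 ≤ x) (hx2 : x ≤ k 1) (hy1 : 1 ≤ y) (hy2 : y ≤ k 1) :
    ((T k n).filter (fun l => l.headD 0 = x)).card
      = ((T k n).filter (fun l => l.headD 0 = y)).card := by
  have key : ∀ (x y : ℕ), 1 ≤ x → x ≤ k 1 → 1 ≤ y → y ≤ k 1 →
      ∀ l ∈ (T k n).filter (fun l => l.headD 0 = x),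
      (y :: l.tail) ∈ (T k n).filter (fun l => l.headD 0 = y) := by
    intro x y hx1 hx2 hy1 hy2 l hl
    rw [Finset.mem_filter] at hl ⊢
    obtain ⟨hlT, hlh⟩ := hl
    have hne : l ≠ [] := by
      intro h; subst h; simp at hlh; omega
    obtain ⟨a, t, rfl⟩ := List.exists_cons_of_ne_nil hne
    rw [mem_T_iff] at hlT ⊢
    simp only [List.tail_cons, List.length_cons] at *
    refine ⟨⟨hlT.1, fun i hi => ?_⟩, rfl⟩
    cases i with
    | zero => simpa using ⟨hy1, hy2⟩
    | succ j =>
      have := hlT.2 (j + 1) hi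
      simpa using this
  refine Finset.card_bij' (fun l _ => y :: l.tail) (fun l _ => x :: l.tail)
    (key x y hx1 hx2 hy1 hy2) (key y x hy1 hy2 hx1 hx2) ?_ ?_
  · intro l hl
    rw [Finset.mem_filter] at hl
    obtain ⟨a, t, rfl⟩ := List.exists_cons_of_ne_nil
      (by intro h; subst h; simp at hl; omega : l ≠ [])
    simp only [List.tail_cons]
    have : a = x := by simpa using hl.2
    rw [this]
  · intro l hl
    rw [Finset.mem_filter] at hl
    obtain ⟨a, t, rfl⟩ := List.exists_cons_of_ne_nil
      (by intro h; subst h; simp at hl; omega : l ≠ [])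
    simp only [List.tail_cons]
    have : a = y := by simpa using hl.2
    rw [this]

/-- The nonroot vertices partition into `k 1` head-fibers. -/
lemma erase_root_eq_biUnion (k : ℕ → ℕ) (n : ℕ) :
    (T k n).erase [] = (Finset.Icc 1 (k 1)).biUnion
      (fun x => (T k n).filter (fun l => l.headD 0 = x)) := by
  ext l
  simp only [Finset.mem_erase, Finset.mem_biUnion, Finset.mem_Icc, Finset.mem_filter]
  constructor
  · rintro ⟨hne, hl⟩
    obtain ⟨a, t, rfl⟩ := List.exists_cons_of_ne_nil hne
    have := head_bounds hl
    exact ⟨a, this, hl, rfl⟩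
  · rintro ⟨x, ⟨hx1, _⟩, hl, hh⟩
    refine ⟨?_, hl⟩
    intro h; subst h; simp at hh; omega

lemma Ncard_eq (k : ℕ → ℕ) (n : ℕ) (hk1 : 1 ≤ k 1) :
    Ncard k n = 1 + k 1 * ((T k n).filter (fun l => l.headD 0 = 1)).card := by
  have h1 : ((T k n).erase []).card = Ncard k n - 1 := by
    rw [Finset.card_erase_of_mem (root_mem_T k n), card_T]
  have h2 : ((T k n).erase []).card = k 1 * ((T k n).filter (fun l => l.headD 0 = 1)).card := by
    rw [erase_root_eq_biUnion, Finset.card_biUnion]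
    · have hc : ∀ x ∈ Finset.Icc 1 (k 1),
          ((T k n).filter (fun l => l.headD 0 = x)).card
            = ((T k n).filter (fun l => l.headD 0 = 1)).card := by
        intro x hx
        rw [Finset.mem_Icc] at hx
        exact card_head_fiber_eq hx.1 hx.2 le_rfl hk1
      rw [Finset.sum_congr rfl hc, Finset.sum_const, Nat.card_Icc, smul_eq_mul,
        Nat.add_sub_cancel]
    · intro x _ y _ hxy
      simp only [Finset.disjoint_left, Finset.mem_filter]
      rintro l ⟨_, rfl⟩ ⟨_, h⟩
      exact hxy h
  have h3 : 1 ≤ Ncard k n := by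
    rw [← card_T]
    exact Finset.card_pos.mpr ⟨[], root_mem_T k n⟩
  omega

lemma ne_lcp_iff {k : ℕ → ℕ} {n : ℕ} {u w : List ℕ} (hu : u ∈ T k n) (hw : w ∈ T k n) :
    (u ≠ w ∧ lcp u w = 0) ↔ u.headD 0 ≠ w.headD 0 := by
  cases u with
  | nil =>
    cases w with
    | nil => simp
    | cons b bs =>
      have hb := (head_bounds hw).1
      simp only [lcp_nil_left, List.headD_nil, List.headD_cons]
      constructor
      · intro _; omega
      · intro _; exact ⟨by simp, by simp⟩
  | cons a as =>
    cases w with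
    | nil =>
      have ha := (head_bounds hu).1
      simp only [lcp_nil_right, List.headD_nil, List.headD_cons]
      constructor
      · intro _; omega
      · intro _; exact ⟨by simp, by simp⟩
    | cons b bs =>
      simp only [List.headD_cons]
      by_cases h : a = b
      · subst h
        have : lcp (a :: as) (a :: bs) = lcp as bs + 1 := by simp [lcp]
        simp [this]
      · have : lcp (a :: as) (b :: bs) = 0 := by simp [lcp, h]
        simp [this, h]

lemma claim1 (k : ℕ → ℕ) (n : ℕ) :
    (((T k n) ×ˢ (T k n)).filter (fun p => ¬ p.1.headD 0 = p.2.headD 0)).card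
      = 2 * traffic k n [] := by
  classical
  set A := T k n with hA
  set F := (A.powersetCard 2).filter
    (fun s => ∃ u ∈ s, ∃ w ∈ s, u ≠ w ∧ onPath [] u w) with hF
  have hmap : ∀ p ∈ (A ×ˢ A).filter (fun p => ¬ p.1.headD 0 = p.2.headD 0),
      ({p.1, p.2} : Finset (List ℕ)) ∈ F := by
    rintro ⟨u, w⟩ hp
    rw [Finset.mem_filter, Finset.mem_product] at hp
    obtain ⟨⟨hu, hw⟩, hne⟩ := hp
    have h := (ne_lcp_iff hu hw).mpr hne
    rw [hF, Finset.mem_filter, Finset.mem_powersetCard]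
    refine ⟨⟨?_, ?_⟩, u, by simp, w, by simp, h.1, (onPath_root_iff u w).mpr h.2⟩
    · intro t ht
      simp only [Finset.mem_insert, Finset.mem_singleton] at ht
      rcases ht with rfl | rfl <;> assumption
    · exact Finset.card_pair h.1
  rw [Finset.card_eq_sum_card_fiberwise hmap]
  have hfib : ∀ s ∈ F,
      (((A ×ˢ A).filter (fun p => ¬ p.1.headD 0 = p.2.headD 0)).filter
        (fun p => ({p.1, p.2} : Finset (List ℕ)) = s)).card = 2 := by
    intro s hs
    rw [hF, Finset.mem_filter, Finset.mem_powersetCard] at hs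
    obtain ⟨⟨hsub, hcard⟩, u, hu, w, hw, hne, hop⟩ := hs
    have hlcp : lcp u w = 0 := (onPath_root_iff u w).mp hop
    have hsuw : ({u, w} : Finset (List ℕ)) = s := by
      apply Finset.eq_of_subset_of_card_le
      · intro t ht
        simp only [Finset.mem_insert, Finset.mem_singleton] at ht
        rcases ht with rfl | rfl <;> assumption
      · rw [hcard, Finset.card_pair hne]
    have hset : (((A ×ˢ A).filter (fun p => ¬ p.1.headD 0 = p.2.headD 0)).filter
        (fun p => ({p.1, p.2} : Finset (List ℕ)) = s)) = {(u, w), (w, u)} := by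
      ext ⟨a, b⟩
      simp only [Finset.mem_filter, Finset.mem_product, Finset.mem_insert,
        Finset.mem_singleton, Prod.mk.injEq]
      constructor
      · rintro ⟨⟨⟨ha, hb⟩, hab⟩, heq⟩
        rw [← hsuw] at heq
        have hset2 : ({a, b} : Set (List ℕ)) = {u, w} := by
          have := congrArg (fun s : Finset (List ℕ) => (s : Set (List ℕ))) heq
          simpa using this
        rw [Set.pair_eq_pair_iff] at hset2
        tauto
      · have huA : u ∈ A := hsub hu
        have hwA : w ∈ A := hsub hw
        have hh : u.headD 0 ≠ w.headD 0 := (ne_lcp_iff huA hwA).mp ⟨hne, hlcp⟩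
        rintro (⟨rfl, rfl⟩ | ⟨rfl, rfl⟩)
        · exact ⟨⟨⟨huA, hwA⟩, hh⟩, hsuw⟩
        · refine ⟨⟨⟨hwA, huA⟩, Ne.symm hh⟩, ?_⟩
          rw [Finset.pair_comm]; exact hsuw
    rw [hset]
    rw [Finset.card_insert_of_notMem (by simp [Prod.ext_iff]; intro h; exact absurd h hne),
      Finset.card_singleton]
  rw [Finset.sum_congr rfl hfib, Finset.sum_const, smul_eq_mul, mul_comm]
  rfl

lemma claim2 (k : ℕ → ℕ) (n : ℕ) (hk1 : 1 ≤ k 1) :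
    (((T k n) ×ˢ (T k n)).filter (fun p => p.1.headD 0 = p.2.headD 0)).card
      = (Ncard k n - 1) * ((T k n).filter (fun l => l.headD 0 = 1)).card + 1 := by
  classical
  set A := T k n with hA
  set M := (A.filter (fun l => l.headD 0 = 1)).card with hM
  rw [Finset.card_filter, Finset.sum_product]
  have inner : ∀ u ∈ A,
      (∑ w ∈ A, if u.headD 0 = w.headD 0 then 1 else 0) = if u = [] then 1 else M := by
    intro u hu
    rw [← Finset.card_filter]
    cases u with
    | nil =>
      have : A.filter (fun w => ([] : List ℕ).headD 0 = w.headD 0) = {[]} := by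
        ext w
        rw [Finset.mem_filter]
        simp only [Finset.mem_singleton, List.headD_nil]
        constructor
        · rintro ⟨hwA, hh⟩
          cases w with
          | nil => rfl
          | cons b bs =>
            have := (head_bounds hwA).1
            simp at hh
            omega
        · rintro rfl
          exact ⟨root_mem_T k n, rfl⟩
      rw [this, Finset.card_singleton]
      simp
    | cons a t =>
      simp only [if_neg (by simp : ¬ (a :: t) = [])]
      have hb := head_bounds hu
      have : A.filter (fun w => (a :: t).headD 0 = w.headD 0)
          = A.filter (fun w => w.headD 0 = a) := by
        apply Finset.filter_congr
        intro w _
        simp only [List.headD_cons]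
        constructor <;> (intro h; exact h.symm)
      rw [this, hM]
      exact card_head_fiber_eq hb.1 hb.2 le_rfl hk1
  rw [Finset.sum_congr rfl inner]
  rw [← Finset.sum_erase_add A _ (root_mem_T k n), if_pos rfl]
  have : ∀ u ∈ A.erase [], (if u = [] then 1 else M) = M := by
    intro u hu
    rw [if_neg (Finset.ne_of_mem_erase hu)]
  rw [Finset.sum_congr rfl this, Finset.sum_const, smul_eq_mul,
    Finset.card_erase_of_mem (root_mem_T k n), card_T]

lemma M_pos {k : ℕ → ℕ} {n : ℕ} (hn : 1 ≤ n) (hk1 : 1 ≤ k 1) :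
    1 ≤ ((T k n).filter (fun l => l.headD 0 = 1)).card := by
  apply Finset.card_pos.mpr
  refine ⟨[1], Finset.mem_filter.mpr ⟨?_, rfl⟩⟩
  rw [mem_T_iff]
  refine ⟨by simpa using hn, ?_⟩
  intro i hi
  have : i = 0 := by simp at hi; omega
  subst this
  simpa using hk1

lemma main_count (k : ℕ → ℕ) (n : ℕ) (hk1 : 1 ≤ k 1) :
    2 * traffic k n []
      + ((Ncard k n - 1) * ((T k n).filter (fun l => l.headD 0 = 1)).card + 1)
      = Ncard k n * Ncard k n := by
  classical
  have h := Finset.card_filter_add_card_filter_not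
    (s := (T k n) ×ˢ (T k n)) (p := fun p => p.1.headD 0 = p.2.headD 0)
  rw [Finset.card_product, card_T] at h
  rw [← claim1 k n, ← claim2 k n hk1, ← h]
  ring_nf

/-- For every `n ≥ 1`, the proportion of traffic through the root of `T_n` equals
`((k₁ - 1)/k₁) ((N-1)/N) + 2/N`; consequently it converges to `1 - 1/k₁` as `n → ∞`. -/
theorem traffic_prop_root (k : ℕ → ℕ) (hk : ∀ i, 1 ≤ k i) :
    (∀ n, 1 ≤ n →
      trafficProp k n [] =
        (((k 1 : ℝ) - 1) / (k 1 : ℝ)) * (((Ncard k n : ℝ) - 1) / (Ncard k n : ℝ)) +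
          2 / (Ncard k n : ℝ)) ∧
    Tendsto (fun n => trafficProp k n []) atTop (nhds (1 - 1 / (k 1 : ℝ))) := by
  have hk1 : 1 ≤ k 1 := hk 1
  have hKne : (k 1 : ℝ) ≠ 0 := Nat.cast_ne_zero.mpr (by omega)
  have part1 : ∀ n, 1 ≤ n →
      trafficProp k n [] =
        (((k 1 : ℝ) - 1) / (k 1 : ℝ)) * (((Ncard k n : ℝ) - 1) / (Ncard k n : ℝ)) +
          2 / (Ncard k n : ℝ) := by
    intro n hn
    set M := ((T k n).filter (fun l => l.headD 0 = 1)).card with hM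
    have hN : Ncard k n = 1 + k 1 * M := Ncard_eq k n hk1
    have hc := main_count k n hk1
    have hM1 : 1 ≤ M := M_pos hn hk1
    have hNR : (Ncard k n : ℝ) = 1 + (k 1 : ℝ) * (M : ℝ) := by exact_mod_cast hN
    have hcR : 2 * (traffic k n [] : ℝ)
        + ((k 1 : ℝ) * M * M + 1) = (Ncard k n : ℝ) * (Ncard k n : ℝ) := by
      have hsub : Ncard k n - 1 = k 1 * M := by omega
      rw [hsub, ← hM] at hc
      exact_mod_cast hc
    have h2t : 2 * (traffic k n [] : ℝ)
        = 2 * (k 1 : ℝ) * M + (k 1 : ℝ) * (k 1 : ℝ) * M * M - (k 1 : ℝ) * M * M := by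
      linear_combination hcR + ((Ncard k n : ℝ) + 1 + (k 1 : ℝ) * M) * hNR
    have hMne : (M : ℝ) ≠ 0 := Nat.cast_ne_zero.mpr (by omega)
    have hMpos : (0:ℝ) < M := by exact_mod_cast hM1
    have hKpos : (0:ℝ) < k 1 := by exact_mod_cast hk1
    show (traffic k n [] : ℝ) / ((Ncard k n : ℝ) * ((Ncard k n : ℝ) - 1) / 2) = _
    rw [hNR]
    field_simp
    linear_combination (k 1 : ℝ) * h2t
  refine ⟨part1, ?_⟩
  have hbeta : ∀ l, 1 ≤ beta k l := by
    intro l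
    exact Finset.one_le_prod' (fun i _ => hk (i + 1))
  have hNlb : ∀ n, n + 1 ≤ Ncard k n := by
    intro n
    calc n + 1 = ∑ _l ∈ Finset.range (n + 1), 1 := by simp
    _ ≤ _ := Finset.sum_le_sum fun i _ => hbeta i
  have hNtop : Tendsto (fun n => (Ncard k n : ℝ)) atTop atTop := by
    apply tendsto_atTop_mono (fun n => ?_) tendsto_natCast_atTop_atTop
    exact_mod_cast Nat.le_of_succ_le (hNlb n)
  have hinv : Tendsto (fun n => ((Ncard k n : ℝ))⁻¹) atTop (nhds 0) :=
    hNtop.inv_tendsto_atTop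
  have hlim : Tendsto (fun n => (((k 1 : ℝ) - 1) / (k 1 : ℝ)) * (1 - ((Ncard k n : ℝ))⁻¹)
      + 2 * ((Ncard k n : ℝ))⁻¹) atTop
      (nhds ((((k 1 : ℝ) - 1) / (k 1 : ℝ)) * (1 - 0) + 2 * 0)) :=
    (tendsto_const_nhds.mul (tendsto_const_nhds.sub hinv)).add (tendsto_const_nhds.mul hinv)
  have hval : (((k 1 : ℝ) - 1) / (k 1 : ℝ)) * (1 - 0) + 2 * 0 = 1 - 1 / (k 1 : ℝ) := by
    field_simp
    ring
  rw [hval] at hlim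
  apply hlim.congr'
  filter_upwards [eventually_ge_atTop 1] with n hn
  rw [part1 n hn]
  have hNne : (Ncard k n : ℝ) ≠ 0 := by
    have h1 : 1 ≤ Ncard k n := le_trans (by omega) (hNlb n)
    exact Nat.cast_ne_zero.mpr (by omega)
  have hrw : ((Ncard k n : ℝ) - 1) / (Ncard k n : ℝ) = 1 - ((Ncard k n : ℝ))⁻¹ := by
    rw [sub_div, div_self hNne, one_div]
  rw [hrw]
  ring

end TreeTraffic
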